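/- Let L be a self-adjoint continuous linear operator on the bipartite Hilbert space H = EuclideanSpace ℂ (Fin m × Fin n). Suppose the unit vectors a and b maximize ⟨a'⊗b', L (a'⊗b')⟩ over all pairs of unit vectors (a', b'), set g = ⟨a⊗b, L (a⊗b)⟩ and χ = L (a⊗b) − g • (a⊗b). Then χ is 2-orthogonal to a⊗b: for every x ∈ EuclideanSpace ℂ (Fin m) one has ⟨x⊗b, χ⟩ = 0, and for every y ∈ EuclideanSpace ℂ (Fin n) one has ⟨a⊗y, χ⟩ = 0. (Second form of the separability eigenvalue equation, L(a⊗b) = g(a⊗b) + χ with χ N-orthogonal.) -/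

import Mathlib

open scoped ComplexInnerProductSpace

/-- The product vector `a ⊗ b` in the bipartite space, `(a ⊗ b)(i, k) = a i * b k`. -/
noncomputable def tp {m n : ℕ} (a : EuclideanSpace ℂ (Fin m)) (b : EuclideanSpace ℂ (Fin n)) :
    EuclideanSpace ℂ (Fin m × Fin n) :=
  WithLp.toLp 2 (fun p : Fin m × Fin n => a p.1 * b p.2)

lemma inner_tp_tp {m n : ℕ} (x x' : EuclideanSpace ℂ (Fin m)) (b b' : EuclideanSpace ℂ (Fin n)) :
    ⟪tp x b, tp x' b'⟫ = ⟪x, x'⟫ * ⟪b, b'⟫ := by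
  simp only [tp, PiLp.inner_apply, RCLike.inner_apply]
  rw [Finset.sum_mul_sum]
  rw [← Finset.univ_product_univ, Finset.sum_product]
  simp only [map_mul]
  congr 1; ext i; congr 1; ext k; ring

noncomputable def embR {m n : ℕ} (b : EuclideanSpace ℂ (Fin n)) :
    EuclideanSpace ℂ (Fin m) →L[ℂ] EuclideanSpace ℂ (Fin m × Fin n) :=
  LinearMap.toContinuousLinearMap
  { toFun := fun a => tp a b
    map_add' := by
      intro x y; ext p; simp [tp]; ring
    map_smul' := by
      intro c x; ext p; simp [tp]; ring }

lemma embR_apply {m n : ℕ} (b : EuclideanSpace ℂ (Fin n)) (x : EuclideanSpace ℂ (Fin m)) :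
    embR b x = tp x b := rfl

noncomputable def embL {m n : ℕ} (a : EuclideanSpace ℂ (Fin m)) :
    EuclideanSpace ℂ (Fin n) →L[ℂ] EuclideanSpace ℂ (Fin m × Fin n) :=
  LinearMap.toContinuousLinearMap
  { toFun := fun b => tp a b
    map_add' := by
      intro x y; ext p; simp [tp]; ring
    map_smul' := by
      intro c x; ext p; simp [tp]; ring }

lemma embL_apply {m n : ℕ} (a : EuclideanSpace ℂ (Fin m)) (y : EuclideanSpace ℂ (Fin n)) :
    embL a y = tp a y := rfl

lemma aux_key {E H : Type*} [NormedAddCommGroup E] [InnerProductSpace ℂ E]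
    [NormedAddCommGroup H] [InnerProductSpace ℂ H]
    [FiniteDimensional ℂ E] [FiniteDimensional ℂ H]
    (L : H →L[ℂ] H) (hLsa : IsSelfAdjoint L)
    (e : E →L[ℂ] H) (he : ∀ x y : E, ⟪e x, e y⟫ = ⟪x, y⟫)
    (a : E) (ha : ‖a‖ = 1)
    (hmax : ∀ x : E, ‖x‖ = 1 → (⟪e x, L (e x)⟫).re ≤ (⟪e a, L (e a)⟫).re) :
    ∀ x : E, ⟪e x, L (e a)⟫ = ((⟪e a, L (e a)⟫).re : ℂ) * ⟪x, a⟫ := by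
  set Lb : E →L[ℂ] E := (ContinuousLinearMap.adjoint e).comp (L.comp e) with hLb
  have hinner : ∀ x y : E, ⟪x, Lb y⟫ = ⟪e x, L (e y)⟫ := by
    intro x y
    simp [hLb, ContinuousLinearMap.adjoint_inner_right]
  have hLmap : ∀ u v : H, ⟪L u, v⟫ = ⟪u, L v⟫ := by
    intro u v
    rw [← ContinuousLinearMap.adjoint_inner_left L, hLsa.adjoint_eq]
  have hsym : IsSelfAdjoint Lb := by
    rw [ContinuousLinearMap.isSelfAdjoint_iff_isSymmetric]
    intro x y
    show ⟪Lb x, y⟫ = ⟪x, Lb y⟫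
    rw [← inner_conj_symm (Lb x) y, hinner, hinner, ← hLmap]
    exact inner_conj_symm _ _
  have hre : ∀ x : E, Lb.reApplyInnerSelf x = (⟪e x, L (e x)⟫).re := by
    intro x
    rw [ContinuousLinearMap.reApplyInnerSelf_apply]
    rw [← inner_conj_symm (Lb x) x, hinner]
    simp
    rw [hLmap]
  have ha0 : a ≠ 0 := by intro h; rw [h] at ha; simp at ha
  have hmaxOn : IsMaxOn Lb.reApplyInnerSelf (Metric.sphere (0 : E) ‖a‖) a := by
    intro x hx
    simp only [Metric.mem_sphere, dist_zero_right, ha] at hx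
    simp only [Set.mem_setOf_eq, hre]
    exact hmax x hx
  have hev := hsym.hasEigenvector_of_isMaxOn ha0 hmaxOn
  have heq := hev.apply_eq_smul
  have hex : ∃ μ : ℂ, Lb a = μ • a := by
    simp only [ContinuousLinearMap.coe_coe] at heq
    exact ⟨_, heq⟩
  obtain ⟨μ, hμ⟩ := hex
  have haa : ⟪a, a⟫ = (1 : ℂ) := by
    rw [inner_self_eq_norm_sq_to_K, ha]; norm_num
  have hca : ⟪a, Lb a⟫ = μ := by
    rw [hμ, inner_smul_right, haa, mul_one]
  have hreal : ⟪e a, L (e a)⟫ = ((⟪e a, L (e a)⟫).re : ℂ) := by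
    have : (starRingEnd ℂ) ⟪e a, L (e a)⟫ = ⟪e a, L (e a)⟫ := by
      rw [inner_conj_symm, hLmap]
    exact (Complex.conj_eq_iff_re.mp this).symm
  have hcval : μ = ((⟪e a, L (e a)⟫).re : ℂ) := by
    rw [← hca, hinner]; exact hreal
  intro x
  rw [← hinner, hμ, inner_smul_right, hcval]

/-- **Second form of the separability eigenvalue equation.**  If the unit vectors `a, b`
maximize `⟨a'⊗b', L (a'⊗b')⟩` for a self-adjoint operator `L`, `g = ⟨a⊗b, L (a⊗b)⟩` and
`χ = L(a⊗b) − g•(a⊗b)`, then `χ` is 2-orthogonal to `a⊗b`: `⟨x⊗b, χ⟩ = 0` for all `x`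
and `⟨a⊗y, χ⟩ = 0` for all `y`. -/
theorem see_second_form {m n : ℕ} (hm : 1 ≤ m) (hn : 1 ≤ n)
    (L : EuclideanSpace ℂ (Fin m × Fin n) →L[ℂ] EuclideanSpace ℂ (Fin m × Fin n))
    (hLsa : IsSelfAdjoint L)
    (a : EuclideanSpace ℂ (Fin m)) (b : EuclideanSpace ℂ (Fin n))
    (ha : ‖a‖ = 1) (hb : ‖b‖ = 1)
    (hmax : ∀ (a' : EuclideanSpace ℂ (Fin m)) (b' : EuclideanSpace ℂ (Fin n)),
      ‖a'‖ = 1 → ‖b'‖ = 1 →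
      (⟪tp a' b', L (tp a' b')⟫).re ≤ (⟪tp a b, L (tp a b)⟫).re)
    (g : ℝ) (hg : g = (⟪tp a b, L (tp a b)⟫).re)
    (χ : EuclideanSpace ℂ (Fin m × Fin n))
    (hχ : χ = L (tp a b) - (g : ℂ) • tp a b) :
    (∀ x : EuclideanSpace ℂ (Fin m), ⟪tp x b, χ⟫ = 0) ∧
    (∀ y : EuclideanSpace ℂ (Fin n), ⟪tp a y, χ⟫ = 0) := by
  have hbb : ⟪b, b⟫ = (1 : ℂ) := by
    rw [inner_self_eq_norm_sq_to_K, hb]; norm_num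
  have haa : ⟪a, a⟫ = (1 : ℂ) := by
    rw [inner_self_eq_norm_sq_to_K, ha]; norm_num
  constructor
  · have key := aux_key L hLsa (embR b)
      (fun x y => by rw [embR_apply, embR_apply, inner_tp_tp, hbb, mul_one])
      a ha
      (fun x hx => by
        simp only [embR_apply]
        exact hmax x b hx hb)
    intro x
    have k1 := key x
    simp only [embR_apply] at k1
    rw [hχ, inner_sub_right, inner_smul_right, k1, inner_tp_tp, hbb, mul_one, hg]
    ring
  · have key := aux_key L hLsa (embL a)
      (fun x y => by rw [embL_apply, embL_apply, inner_tp_tp, haa, one_mul])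
      b hb
      (fun y hy => by
        simp only [embL_apply]
        exact hmax a y ha hy)
    intro y
    have k1 := key y
    simp only [embL_apply] at k1
    rw [hχ, inner_sub_right, inner_smul_right, k1, inner_tp_tp, haa, one_mul, hg]
    ring
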